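/- For every integer t ≥ 2, the equitable dominator chromatic number of the line graph of the friendship graph F_t equals 2t, i.e., χ_ed(L(F_t)) = 2t. -/

import Mathlib

open SimpleGraph

/-- `c` is an equitable dominator coloring of `G` with `n` colors: it is a proper vertex
coloring, every vertex dominates some nonempty color class (each vertex of that class lies in
its closed neighborhood), and any two color classes differ in cardinality by at most 1. -/
def IsEDColoring {V : Type*} (G : SimpleGraph V) {n : ℕ} (c : V → Fin n) : Prop :=
  (∀ ⦃u v : V⦄, G.Adj u v → c u ≠ c v) ∧
  (∀ v : V, ∃ j : Fin n, (∃ u, c u = j) ∧ ∀ u, c u = j → u = v ∨ G.Adj v u) ∧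
  (∀ i j : Fin n, {u | c u = i}.ncard ≤ {u | c u = j}.ncard + 1)

/-- The equitable dominator chromatic number of `G`: the least number of colors admitting an
equitable dominator coloring of `G`. -/
noncomputable def edcn {V : Type*} (G : SimpleGraph V) : ℕ :=
  sInf {n : ℕ | ∃ c : V → Fin n, IsEDColoring G c}
/-- The friendship graph `F_t`: `t` triangles sharing the single common universal vertex
`none`; the `i`-th triangle has the two further vertices `some (i, true)` and
`some (i, false)`. -/
def friendship (t : ℕ) : SimpleGraph (Option (Fin t × Bool)) :=
  SimpleGraph.fromRel (fun x y =>
    (∃ p : Fin t × Bool, x = none ∧ y = some p) ∨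
    (∃ i : Fin t, x = some (i, true) ∧ y = some (i, false)))

namespace EDF

variable {t : ℕ}

abbrev FV (t : ℕ) := Option (Fin t × Bool)

def pcol (t : ℕ) : FV t → FV t → ℕ
  | none, none => 0
  | none, some (i, b) => 2 * i.val + (if b then 0 else 1)
  | some (i, b), none => 2 * i.val + (if b then 0 else 1)
  | some (i, _), some (j, _) => 2 * ((min i.val j.val + 1) % t)

lemma pcol_symm (t : ℕ) : ∀ x y : FV t, pcol t x y = pcol t y x := by
  rintro (_|⟨i,b⟩) (_|⟨j,c⟩) <;> simp [pcol, Nat.min_comm]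

def ecol (t : ℕ) : Sym2 (FV t) → ℕ := Sym2.lift ⟨pcol t, pcol_symm t⟩

def spoke (i : Fin t) (b : Bool) : Sym2 (FV t) := s(none, some (i, b))
def tri (i : Fin t) : Sym2 (FV t) := s(some (i, true), some (i, false))

@[simp] lemma ecol_spoke (i : Fin t) (b : Bool) :
    ecol t (spoke i b) = 2 * i.val + (if b then 0 else 1) := by
  simp [ecol, spoke, pcol]

@[simp] lemma ecol_tri (i : Fin t) : ecol t (tri i) = 2 * ((i.val + 1) % t) := by
  simp [ecol, tri, pcol]

lemma friendship_adj {x y : FV t} :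
    (friendship t).Adj x y ↔ x ≠ y ∧
      ((∃ p, x = none ∧ y = some p) ∨ (∃ i : Fin t, x = some (i, true) ∧ y = some (i, false)) ∨
       (∃ p, y = none ∧ x = some p) ∨ (∃ i : Fin t, y = some (i, true) ∧ x = some (i, false))) := by
  simp only [friendship, fromRel_adj]
  refine and_congr_right fun _ => ?_
  constructor
  · rintro ((h|h)|(h|h))
    · exact Or.inl h
    · exact Or.inr (Or.inl h)
    · exact Or.inr (Or.inr (Or.inl h))
    · exact Or.inr (Or.inr (Or.inr h))
  · rintro (h|h|h|h)
    · exact Or.inl (Or.inl h)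
    · exact Or.inl (Or.inr h)
    · exact Or.inr (Or.inl h)
    · exact Or.inr (Or.inr h)

lemma spoke_mem (i : Fin t) (b : Bool) : spoke i b ∈ (friendship t).edgeSet := by
  rw [spoke, mem_edgeSet, friendship_adj]
  exact ⟨by simp, Or.inl ⟨(i, b), rfl, rfl⟩⟩

lemma tri_mem (i : Fin t) : tri i ∈ (friendship t).edgeSet := by
  rw [tri, mem_edgeSet, friendship_adj]
  exact ⟨by simp, Or.inr (Or.inl ⟨i, rfl, rfl⟩)⟩

lemma edge_cases {e : Sym2 (FV t)} (he : e ∈ (friendship t).edgeSet) :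
    (∃ i b, e = spoke i b) ∨ ∃ i, e = tri i := by
  induction e using Sym2.ind with
  | _ x y =>
    rw [mem_edgeSet, friendship_adj] at he
    obtain ⟨-, h⟩ := he
    rcases h with ⟨p, rfl, rfl⟩ | ⟨i, rfl, rfl⟩ | ⟨p, rfl, rfl⟩ | ⟨i, rfl, rfl⟩
    · exact Or.inl ⟨p.1, p.2, by simp [spoke]⟩
    · exact Or.inr ⟨i, rfl⟩
    · exact Or.inl ⟨p.1, p.2, by simp [spoke, Sym2.eq_swap]⟩
    · exact Or.inr ⟨i, by simp [tri, Sym2.eq_swap]⟩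

end EDF

namespace EDF
variable {t : ℕ}

lemma pcol_lt (ht : 1 ≤ t) (x y : FV t) : pcol t x y < 2 * t := by
  rcases x with _ | ⟨i, b⟩ <;> rcases y with _ | ⟨j, c⟩ <;> simp only [pcol]
  · omega
  · have := j.isLt; split <;> omega
  · have := i.isLt; split <;> omega
  · have := Nat.mod_lt (min i.val j.val + 1) (show 0 < t by omega); omega

lemma ecol_lt (ht : 1 ≤ t) (e : Sym2 (FV t)) : ecol t e < 2 * t := by
  induction e using Sym2.ind with
  | _ x y => exact pcol_lt ht x y

lemma spoke_inj {i j : Fin t} {b c : Bool} : spoke i b = spoke j c ↔ i = j ∧ b = c := by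
  constructor
  · intro h
    simp only [spoke, Sym2.eq_iff] at h
    rcases h with ⟨-, h⟩ | ⟨h, -⟩
    · obtain ⟨h1, h2⟩ := Prod.mk.injEq .. ▸ Option.some.injEq .. ▸ h
      exact ⟨by exact_mod_cast congrArg Prod.fst (Option.some.inj h),
             by exact_mod_cast congrArg Prod.snd (Option.some.inj h)⟩
    · exact absurd h (by simp)
  · rintro ⟨rfl, rfl⟩; rfl

lemma tri_inj {i j : Fin t} : tri i = tri j ↔ i = j := by
  constructor
  · intro h
    simp only [tri, Sym2.eq_iff] at h
    rcases h with ⟨h, -⟩ | ⟨h, -⟩ <;>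
      simpa using congrArg Prod.fst (Option.some.inj h)
  · rintro rfl; rfl

lemma spoke_ne_tri {i j : Fin t} {b : Bool} : spoke i b ≠ tri j := by
  intro h
  simp only [spoke, tri, Sym2.eq_iff] at h
  rcases h with ⟨h, -⟩ | ⟨h, -⟩ <;> exact (Option.some_ne_none _ h.symm).elim

lemma mod_unique (ht : 1 ≤ t) {i j : ℕ} (hi : i < t) (hj : j < t)
    (h : (j + 1) % t = i) : j = (i + t - 1) % t := by
  rcases Nat.lt_or_ge (j + 1) t with h' | h'
  · rw [Nat.mod_eq_of_lt h'] at h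
    subst h
    have h2 : j + 1 + t - 1 = j + t := by omega
    rw [h2, Nat.add_mod_right, Nat.mod_eq_of_lt hj]
  · have h2 : j + 1 = t := by omega
    rw [h2, Nat.mod_self] at h
    subst h
    rw [Nat.zero_add, Nat.mod_eq_of_lt (by omega)]
    omega

lemma class_odd (ht : 1 ≤ t) {e : Sym2 (FV t)} (he : e ∈ (friendship t).edgeSet)
    {i : Fin t} (h : ecol t e = 2 * i.val + 1) : e = spoke i false := by
  rcases edge_cases he with ⟨j, c, rfl⟩ | ⟨j, rfl⟩
  · rw [ecol_spoke] at h
    cases c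
    · norm_num at h
      have : j = i := Fin.ext (by omega)
      rw [this]
    · norm_num at h; omega
  · rw [ecol_tri] at h; omega

lemma class_even (ht : 1 ≤ t) {e : Sym2 (FV t)} (he : e ∈ (friendship t).edgeSet)
    {i : Fin t} (h : ecol t e = 2 * i.val) :
    e = spoke i true ∨ e = tri ⟨(i.val + t - 1) % t, Nat.mod_lt _ (by omega)⟩ := by
  rcases edge_cases he with ⟨j, c, rfl⟩ | ⟨j, rfl⟩
  · rw [ecol_spoke] at h
    cases c
    · norm_num at h; omega
    · left
      have : j = i := Fin.ext (by norm_num at h; omega)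
      rw [this]
  · right
    rw [ecol_tri] at h
    have h2 : (j.val + 1) % t = i.val := by omega
    have := mod_unique ht i.isLt j.isLt h2
    congr 1
    exact Fin.ext this

end EDF

namespace EDF
variable {t : ℕ}

def col (t : ℕ) (ht : 2 ≤ t) : (friendship t).edgeSet → Fin (2 * t) :=
  fun e => ⟨ecol t e.val, ecol_lt (by omega) e.val⟩

lemma succ_mod_ne (ht : 2 ≤ t) {i : ℕ} (hi : i < t) : (i + 1) % t ≠ i := by
  rcases Nat.lt_or_ge (i + 1) t with h | h
  · rw [Nat.mod_eq_of_lt h]; omega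
  · have h2 : i + 1 = t := by omega
    rw [h2, Nat.mod_self]; omega

lemma shared_spoke_tri {i j : Fin t} {b : Bool} {w : FV t}
    (h1 : w ∈ spoke i b) (h2 : w ∈ tri j) : i = j := by
  rw [spoke, Sym2.mem_iff] at h1
  rw [tri, Sym2.mem_iff] at h2
  rcases h1 with rfl | rfl
  · rcases h2 with h | h <;> exact (Option.some_ne_none _ h.symm).elim
  · rcases h2 with h | h <;>
      simpa using congrArg Prod.fst (Option.some.inj h)

lemma shared_tri_tri {i j : Fin t} {w : FV t}
    (h1 : w ∈ tri i) (h2 : w ∈ tri j) : i = j := by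
  rw [tri, Sym2.mem_iff] at h1 h2
  rcases h1 with rfl | rfl <;> rcases h2 with h | h <;>
    simpa using congrArg Prod.fst (Option.some.inj h)

lemma spoketri_ne (ht : 2 ≤ t) (i : Fin t) (b : Bool) :
    ecol t (spoke i b) ≠ ecol t (tri i) := by
  rw [ecol_spoke, ecol_tri]
  have hne := succ_mod_ne ht i.isLt
  set m := (i.val + 1) % t with hm
  cases b <;> norm_num <;> omega

lemma proper (ht : 2 ≤ t) {e f : (friendship t).edgeSet}
    (hadj : (friendship t).lineGraph.Adj e f) : col t ht e ≠ col t ht f := by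
  obtain ⟨hne, w, hwe, hwf⟩ := lineGraph_adj_iff_exists.mp hadj
  have hne' : e.val ≠ f.val := fun h => hne (Subtype.ext h)
  intro hcol
  have h : ecol t e.val = ecol t f.val := congrArg Fin.val hcol
  rcases edge_cases e.2 with ⟨i, b, he⟩ | ⟨i, he⟩ <;>
    rcases edge_cases f.2 with ⟨j, c2, hf⟩ | ⟨j, hf⟩ <;>
      rw [he] at hne' h hwe <;> rw [hf] at hne' h hwf
  · -- both spokes
    rw [ecol_spoke, ecol_spoke] at h
    apply hne'
    have hij : i = j ∧ b = c2 := by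
      cases b <;> cases c2 <;> norm_num at h <;>
        first
          | exact ⟨Fin.ext (by omega), rfl⟩
          | omega
    rw [hij.1, hij.2]
  · -- spoke, tri
    have hij : i = j := shared_spoke_tri hwe hwf
    exact spoketri_ne ht i b (hij ▸ h)
  · -- tri, spoke
    have hij : j = i := shared_spoke_tri hwf hwe
    exact spoketri_ne ht j c2 (hij ▸ h.symm)
  · -- tri, tri
    exact hne' (shared_tri_tri hwe hwf ▸ rfl)

lemma dominates (ht : 2 ≤ t) (v : (friendship t).edgeSet) :
    ∃ j : Fin (2 * t), (∃ u, col t ht u = j) ∧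
      ∀ u, col t ht u = j → u = v ∨ (friendship t).lineGraph.Adj v u := by
  have ht1 : 1 ≤ t := by omega
  obtain ⟨i, hv⟩ : ∃ i : Fin t, (∃ b, v.val = spoke i b) ∨ v.val = tri i := by
    rcases edge_cases v.2 with ⟨i, b, h⟩ | ⟨i, h⟩
    exacts [⟨i, Or.inl ⟨b, h⟩⟩, ⟨i, Or.inr h⟩]
  refine ⟨⟨2 * i.val + 1, by have := i.isLt; omega⟩, ⟨⟨spoke i false, spoke_mem i false⟩, ?_⟩, ?_⟩
  · exact Fin.ext (by simpa [col] using ecol_spoke i false)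
  · intro u hu
    have hu' : u.val = spoke i false :=
      class_odd ht1 u.2 (by simpa [col] using congrArg Fin.val hu)
    rcases hv with ⟨b, hv⟩ | hv
    · cases b
      · exact Or.inl (Subtype.ext (hu'.trans hv.symm))
      · refine Or.inr (lineGraph_adj_iff_exists.mpr ⟨?_, none, ?_, ?_⟩)
        · intro h
          have := (congrArg Subtype.val h).trans hu'
          rw [hv] at this
          exact absurd (spoke_inj.mp this).2 (by simp)
        · rw [show (v : Sym2 (FV t)) = spoke i true from hv, spoke, Sym2.mem_iff]; left; rfl
        · rw [show (u : Sym2 (FV t)) = spoke i false from hu', spoke, Sym2.mem_iff]; left; rfl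
    · refine Or.inr (lineGraph_adj_iff_exists.mpr ⟨?_, some (i, false), ?_, ?_⟩)
      · intro h
        have := (congrArg Subtype.val h).trans hu'
        rw [hv] at this
        exact spoke_ne_tri this.symm
      · rw [show (v : Sym2 (FV t)) = tri i from hv, tri, Sym2.mem_iff]; right; rfl
      · rw [show (u : Sym2 (FV t)) = spoke i false from hu', spoke, Sym2.mem_iff]; right; rfl

lemma classes (ht : 2 ≤ t) (j : Fin (2 * t)) :
    1 ≤ {u | col t ht u = j}.ncard ∧ {u | col t ht u = j}.ncard ≤ 2 := by
  have ht1 : 1 ≤ t := by omega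
  have hjlt := j.isLt
  set i : Fin t := ⟨j.val / 2, by omega⟩ with hi
  have hival : i.val = j.val / 2 := rfl
  by_cases hpar : j.val % 2 = 1
  · -- odd class: singleton
    have hjval : j.val = 2 * i.val + 1 := by rw [hival]; omega
    have hset : {u | col t ht u = j} = {⟨spoke i false, spoke_mem i false⟩} := by
      ext u
      simp only [Set.mem_setOf_eq, Set.mem_singleton_iff]
      constructor
      · intro hu
        exact Subtype.ext (class_odd ht1 u.2
          (by rw [show ecol t u.val = (col t ht u).val from rfl, hu, hjval]))
      · rintro rfl
        exact Fin.ext (by show ecol t (spoke i false) = j.val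
                          rw [ecol_spoke, hjval]; norm_num)
    rw [hset, Set.ncard_singleton]
    omega
  · -- even class
    have hjval : j.val = 2 * i.val := by rw [hival]; omega
    constructor
    · have hmem : (⟨spoke i true, spoke_mem i true⟩ : (friendship t).edgeSet) ∈
          {u | col t ht u = j} := by
        exact Fin.ext (by show ecol t (spoke i true) = j.val
                          rw [ecol_spoke, hjval]; norm_num)
      have := (Set.ncard_pos (Set.toFinite _)).mpr ⟨_, hmem⟩
      omega
    · set b : (friendship t).edgeSet :=
        ⟨tri ⟨(i.val + t - 1) % t, Nat.mod_lt _ (by omega)⟩,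
          tri_mem _⟩ with hb
      have hsub : {u | col t ht u = j} ⊆ {⟨spoke i true, spoke_mem i true⟩, b} := by
        intro u hu
        have := class_even ht1 u.2
          (by rw [show ecol t u.val = (col t ht u).val from rfl, hu, hjval])
        rcases this with h | h
        · exact Or.inl (Subtype.ext h)
        · exact Or.inr (Subtype.ext h)
      calc {u | col t ht u = j}.ncard ≤
          ({⟨spoke i true, spoke_mem i true⟩, b} : Set (friendship t).edgeSet).ncard :=
            Set.ncard_le_ncard hsub (Set.toFinite _)
        _ ≤ ({b} : Set (friendship t).edgeSet).ncard + 1 := Set.ncard_insert_le _ _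
        _ = 2 := by rw [Set.ncard_singleton]

lemma isED (ht : 2 ≤ t) : IsEDColoring (friendship t).lineGraph (col t ht) := by
  refine ⟨fun u v h => proper ht h, dominates ht, fun a b => ?_⟩
  have ha := classes ht a
  have hb := classes ht b
  omega

lemma lb (ht : 2 ≤ t) {n : ℕ} (c : (friendship t).edgeSet → Fin n)
    (hc : IsEDColoring (friendship t).lineGraph c) : 2 * t ≤ n := by
  have hinj : Function.Injective
      (fun p : Fin t × Bool => c ⟨spoke p.1 p.2, spoke_mem p.1 p.2⟩) := by
    intro p q h
    by_contra hne
    have hspne : spoke p.1 p.2 ≠ spoke q.1 q.2 := by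
      intro h'
      obtain ⟨h1, h2⟩ := spoke_inj.mp h'
      exact hne (Prod.ext h1 h2)
    have hadj : (friendship t).lineGraph.Adj ⟨spoke p.1 p.2, spoke_mem p.1 p.2⟩
        ⟨spoke q.1 q.2, spoke_mem q.1 q.2⟩ := by
      refine lineGraph_adj_iff_exists.mpr
        ⟨fun h' => hspne (congrArg Subtype.val h'), none, ?_, ?_⟩ <;>
        · rw [show ((⟨spoke _ _, _⟩ : (friendship t).edgeSet) : Sym2 (FV t)) = spoke _ _
            from rfl, spoke, Sym2.mem_iff]
          left; rfl
    exact hc.1 hadj h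
  calc 2 * t = Fintype.card (Fin t × Bool) := by simp [mul_comm]
    _ ≤ Fintype.card (Fin n) := Fintype.card_le_of_injective _ hinj
    _ = n := Fintype.card_fin n

end EDF

theorem edcn_lineGraph_friendship (t : ℕ) (ht : 2 ≤ t) :
    edcn (friendship t).lineGraph = 2 * t := by
  have h1 : 2 * t ∈ {n : ℕ | ∃ c : (friendship t).edgeSet → Fin n,
      IsEDColoring (friendship t).lineGraph c} := ⟨EDF.col t ht, EDF.isED ht⟩
  refine le_antisymm (Nat.sInf_le h1) (le_csInf ⟨_, h1⟩ ?_)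
  rintro n ⟨c, hc⟩
  exact EDF.lb ht c hc
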